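/- Let N = 2^K and let z be an element of the (-1)-eigenspace ℚR⁻ = {p ∈ ℚ[χ]/⟨1+χ+⋯+χ^{N-1}⟩ : p(χ^{-1}) = -p(χ)} (i.e. z is an ℚ-linear combination of χ^r - χ^{N-r}). If f·z = 0 in ℚ[χ]/⟨1+χ+⋯+χ^{N-1}⟩, where f = (1+χ)/(1-χ) = (1+χ)·(1-χ)^{-1}, then z = 0. -/

import Mathlib

noncomputable section
open Polynomial

/-- The quotient ring ℚ[χ]/⟨1+χ+⋯+χ^{2^K-1}⟩. -/
abbrev QB (K : ℕ) :=
  Polynomial ℚ ⧸ Ideal.span {(∑ i ∈ Finset.range (2 ^ K), X ^ i : Polynomial ℚ)}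

def mkB (K : ℕ) : Polynomial ℚ →+* QB K := Ideal.Quotient.mk _

/-- f = (1+χ)·(1-χ)⁻¹. -/
def fQ (K : ℕ) : QB K := mkB K (1 + X) * Ring.inverse (mkB K (1 - X))

/-- If z lies in the (-1)-eigenspace (a ℚ-linear combination of χ^r - χ^{N-r}) and
f·z = 0, then z = 0. -/
theorem stmt6 (K : ℕ) (hK : 1 ≤ K) (z : QB K) (a : ℕ → ℚ)
    (hz : z = mkB K (∑ r ∈ Finset.Icc 1 (2 ^ K / 2 - 1),
      C (a r) * (X ^ r - X ^ (2 ^ K - r))))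
    (hfz : fQ K * z = 0) : z = 0 := by
  set N := 2 ^ K with hNdef
  obtain ⟨m, hm⟩ : ∃ m, N = 2 * m := ⟨2 ^ (K - 1), by rw [hNdef, ← pow_succ']; congr 1; omega⟩
  have hm1 : 1 ≤ m := by
    have : 2 ≤ N := by have := Nat.one_lt_two_pow_iff.mpr (by omega : K ≠ 0); omega
    omega
  set Φ : ℚ[X] := ∑ i ∈ Finset.range N, X ^ i with hΦdef
  set S : ℚ[X] := ∑ i ∈ Finset.range m, (X ^ 2) ^ i with hSdef
  have hX1 : (X + 1 : ℚ[X]) ≠ 0 := by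
    intro h
    have := congrArg (eval 0) h
    simp at this
  -- Φ = (X+1) * S
  have hfac : Φ = (X + 1) * S := by
    have h1 : Φ * (X - 1) = X ^ N - 1 := geom_sum_mul X N
    have h2 : ((X + 1) * S) * (X - 1) = X ^ N - 1 := by
      have h3 : S * (X ^ 2 - 1) = (X ^ 2) ^ m - 1 := geom_sum_mul (X ^ 2 : ℚ[X]) m
      have h4 : ((X : ℚ[X]) ^ 2) ^ m = X ^ N := by rw [← pow_mul, hm]
      rw [← h4, ← h3]; ring
    have hX1' : (X - 1 : ℚ[X]) ≠ 0 := by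
      intro h
      have := congrArg (eval 0) h
      simp at this
    exact mul_right_cancel₀ hX1' (h1.trans h2.symm)
  -- mkB K (1 - X) is a unit
  have hunit : IsUnit (mkB K (1 - X)) := by
    have hcop : IsCoprime (X - 1 : ℚ[X]) Φ := by
      rcases EuclideanDomain.dvd_or_coprime (X - 1 : ℚ[X]) Φ (irreducible_X_sub_C 1) with h | h
      · exfalso
        have := (dvd_iff_isRoot).1 h
        have heval : Φ.eval 1 = N := by
          simp [hΦdef, eval_finset_sum]
        rw [IsRoot, heval] at this
        exact (by positivity : (N : ℚ) ≠ 0) this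
      · exact h
    obtain ⟨u, v, huv⟩ := hcop
    have : mkB K (u * (X - 1)) + mkB K (v * Φ) = 1 := by
      rw [← map_add, huv]; exact map_one _
    have hΦ0 : mkB K Φ = 0 := by
      rw [mkB, Ideal.Quotient.eq_zero_iff_mem]
      exact Ideal.subset_span rfl
    have hinv : mkB K u * mkB K (X - 1) = 1 := by
      simp only [map_mul] at this
      rw [hΦ0, mul_zero, add_zero] at this
      exact this
    have : IsUnit (mkB K (X - 1)) := isUnit_iff_exists_inv.2 ⟨_, (mul_comm _ _).trans hinv⟩
    have hneg : mkB K (1 - X) = - mkB K (X - 1) := by rw [← map_neg]; ring_nf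
    rw [hneg]; exact this.neg
  -- (1+X) * z = 0
  have h1Xz : mkB K (1 + X) * z = 0 := by
    have : mkB K (1 + X) * z = (fQ K * z) * mkB K (1 - X) := by
      rw [fQ]
      have := Ring.inverse_mul_cancel _ hunit
      calc mkB K (1 + X) * z = mkB K (1 + X) * (Ring.inverse (mkB K (1 - X)) * mkB K (1 - X)) * z := by
            rw [this, mul_one]
        _ = mkB K (1 + X) * Ring.inverse (mkB K (1 - X)) * z * mkB K (1 - X) := by ring
    rw [this, hfz, zero_mul]
  set Z : ℚ[X] := ∑ r ∈ Finset.Icc 1 (N / 2 - 1), C (a r) * (X ^ r - X ^ (N - r)) with hZdef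
  have hdvd1 : Φ ∣ (1 + X) * Z := by
    have h0 : mkB K ((1 + X) * Z) = 0 := by rw [map_mul, ← hz]; exact h1Xz
    exact Ideal.mem_span_singleton.1 (Ideal.Quotient.eq_zero_iff_mem.1 h0)
  -- Z(-1) = 0
  have hroot : Z.IsRoot (-1) := by
    rw [IsRoot, hZdef, eval_finset_sum]
    apply Finset.sum_eq_zero
    intro r hr
    simp only [Finset.mem_Icc] at hr
    have hrN : r ≤ N := by omega
    have hpow : (-1 : ℚ) ^ (N - r) = (-1) ^ r := by
      have h1 : (-1 : ℚ) ^ (N - r) * (-1) ^ r = (-1) ^ N := by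
        rw [← pow_add]; congr 1; omega
      have h2 : (-1 : ℚ) ^ N = 1 := by
        rw [hm]; rw [pow_mul]; norm_num
      have h3 : (-1 : ℚ) ^ r * (-1) ^ r = 1 := by
        rw [← pow_add, ← two_mul, pow_mul]; norm_num
      have h4 : ((-1 : ℚ) ^ r) ≠ 0 := by
        intro h; simp [h] at h3
      field_simp at h1 h3 ⊢
      calc (-1 : ℚ) ^ (N - r) = ((-1 : ℚ) ^ (N-r) * (-1)^r) * (-1)^r := by
            rw [mul_assoc, ← sq, h3, mul_one]
        _ = (-1)^r := by rw [h1, h2, one_mul]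
    simp [hpow]
  have hXdvdZ : (X + 1 : ℚ[X]) ∣ Z := by
    have := (dvd_iff_isRoot (p := Z) (a := -1)).2 hroot
    simpa [sub_neg_eq_add] using this
  obtain ⟨W, hW⟩ := hXdvdZ
  -- S coprime to (X+1)
  have hScop : IsCoprime (X + 1 : ℚ[X]) S := by
    rcases EuclideanDomain.dvd_or_coprime (X + 1 : ℚ[X]) S
      (by simpa [sub_neg_eq_add] using irreducible_X_sub_C (-1 : ℚ)) with h | h
    · exfalso
      have h' : (X - C (-1) : ℚ[X]) ∣ S := by simpa [sub_neg_eq_add] using h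
      have := (dvd_iff_isRoot).1 h'
      have heval : S.eval (-1) = m := by
        simp [hSdef, eval_finset_sum]
      rw [IsRoot, heval] at this
      exact (by positivity : (m : ℚ) ≠ 0) this
    · exact h
  -- conclude Φ ∣ Z
  have hdvd2 : S ∣ (X + 1) * W := by
    have : (X + 1) * S ∣ (X + 1) * ((X + 1) * W) := by
      rw [← hW, ← hfac]
      have : ((1 : ℚ[X]) + X) * Z = (X + 1) * Z := by ring
      rw [← this]; exact hdvd1
    exact (mul_dvd_mul_iff_left hX1).1 this
  have hSdvdW : S ∣ W := hScop.symm.dvd_of_dvd_mul_left hdvd2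
  have hΦZ : Φ ∣ Z := by
    rw [hfac, hW]
    exact mul_dvd_mul_left _ hSdvdW
  rw [hz]
  exact Ideal.Quotient.eq_zero_iff_mem.2 (Ideal.mem_span_singleton.2 hΦZ)
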